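/- For every δ > 0 there exists a reversible nearest-neighbour periodic environment on Z^2 with all one-step probabilities strictly positive and average negative gradient g ≠ 0, such that the angle between g and the drift ν, namely arccos( ⟨g, ν⟩ / (|g| |ν|) ), is greater than π/2 − δ, while still ⟨g, ν⟩ > 0. Thus the conclusion ⟨g, ν⟩ > 0 of the main theorem cannot be improved to any fixed angle bound below π/2. -/

import Mathlib

noncomputable section

/-- `e` is one of the four unit vectors of `ℤ²`. -/
def IsUnitVec (e : Fin 2 → ℤ) : Prop :=
  ∃ i : Fin 2, e = Pi.single i 1 ∨ e = -Pi.single i 1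

/-- The family of jump distributions is nearest neighbour. -/
def IsNearestNeighbour (p : (Fin 2 → ℤ) → (Fin 2 → ℤ) → ℝ) : Prop :=
  ∀ x y, p x y ≠ 0 → IsUnitVec y

/-- The average negative gradient of the potential for periods `M₁, M₂`. -/
def avgNegGrad (M1 M2 : ℕ) (p : (Fin 2 → ℤ) → (Fin 2 → ℤ) → ℝ) : Fin 2 → ℝ :=
  fun i => ((![M1, M2] i : ℕ) : ℝ)⁻¹ * ∑ j ∈ Finset.range (![M1, M2] i),
    Real.log (p (Pi.single i (j : ℤ)) (Pi.single i 1) /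
      p (Pi.single i ((j : ℤ) + 1)) (-Pi.single i 1))

/-- A fundamental domain `{0, …, M₁-1} × {0, …, M₂-1}` for the torus
`ℤ²/(M₁ℤ × M₂ℤ)`, as a finite set of lattice points. -/
def fundDom (M1 M2 : ℕ) : Finset (Fin 2 → ℤ) :=
  (Finset.range M1 ×ˢ Finset.range M2).image fun q => ![(q.1 : ℤ), (q.2 : ℤ)]

namespace AngleAux

/-- The four unit vectors. -/
def EE (i : Fin 2) : Fin 2 → ℤ := Pi.single i 1

lemma h01 : EE 0 ≠ -EE 0 := by
  intro h; have := congrFun h 0; simp [EE, Pi.single_apply] at this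
lemma h02 : EE 0 ≠ EE 1 := by
  intro h; have := congrFun h 0; simp [EE, Pi.single_apply] at this
lemma h03 : EE 0 ≠ -EE 1 := by
  intro h; have := congrFun h 0; simp [EE, Pi.single_apply] at this
lemma h12 : -EE 0 ≠ EE 1 := by
  intro h; have := congrFun h 0; simp [EE, Pi.single_apply] at this
lemma h13 : -EE 0 ≠ -EE 1 := by
  intro h; have := congrFun h 0; simp [EE, Pi.single_apply] at this
lemma h23 : EE 1 ≠ -EE 1 := by
  intro h; have := congrFun h 1; simp [EE, Pi.single_apply] at this

/-- The common jump distribution. -/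
def ff (a b cc dd : ℝ) (y : Fin 2 → ℤ) : ℝ :=
  if y = EE 0 then a else if y = -EE 0 then b else if y = EE 1 then cc
  else if y = -EE 1 then dd else 0

/-- The (homogeneous) environment. -/
def pp (a b cc dd : ℝ) : (Fin 2 → ℤ) → (Fin 2 → ℤ) → ℝ := fun _ y => ff a b cc dd y

/-- The (linear) potential. -/
def uu (L ε : ℝ) : (Fin 2 → ℤ) → ℝ := fun x => -(L * (x 0 : ℝ) + ε * (x 1 : ℝ))

variable {a b cc dd : ℝ}

lemma ff0 : ff a b cc dd (EE 0) = a := by rw [ff, if_pos rfl]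
lemma ff1 : ff a b cc dd (-EE 0) = b := by
  rw [ff, if_neg (Ne.symm h01), if_pos rfl]
lemma ff2 : ff a b cc dd (EE 1) = cc := by
  rw [ff, if_neg (Ne.symm h02), if_neg (Ne.symm h12), if_pos rfl]
lemma ff3 : ff a b cc dd (-EE 1) = dd := by
  rw [ff, if_neg (Ne.symm h03), if_neg (Ne.symm h13), if_neg (Ne.symm h23), if_pos rfl]

/-- The support finset. -/
def SS : Finset (Fin 2 → ℤ) := {EE 0, -EE 0, EE 1, -EE 1}

lemma ff_off {y : Fin 2 → ℤ} (hy : y ∉ SS) : ff a b cc dd y = 0 := by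
  simp only [SS, Finset.mem_insert, Finset.mem_singleton, not_or] at hy
  rw [ff, if_neg hy.1, if_neg hy.2.1, if_neg hy.2.2.1, if_neg hy.2.2.2]

lemma sum_SS (F : (Fin 2 → ℤ) → ℝ) :
    ∑ y ∈ SS, F y = F (EE 0) + F (-EE 0) + F (EE 1) + F (-EE 1) := by
  rw [SS]
  rw [Finset.sum_insert (by
        simp only [Finset.mem_insert, Finset.mem_singleton]
        push_neg
        exact ⟨h01, h02, h03⟩),
    Finset.sum_insert (by
        simp only [Finset.mem_insert, Finset.mem_singleton]
        push_neg
        exact ⟨h12, h13⟩),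
    Finset.sum_insert (by simpa using h23), Finset.sum_singleton]
  ring

lemma unit_cases {e : Fin 2 → ℤ} (he : IsUnitVec e) :
    e = EE 0 ∨ e = -EE 0 ∨ e = EE 1 ∨ e = -EE 1 := by
  obtain ⟨i, h | h⟩ := he
  · obtain hi | hi : i = 0 ∨ i = 1 := by omega
    · subst hi; exact Or.inl h
    · subst hi; exact Or.inr (Or.inr (Or.inl h))
  · obtain hi | hi : i = 0 ∨ i = 1 := by omega
    · subst hi; exact Or.inr (Or.inl h)
    · subst hi; exact Or.inr (Or.inr (Or.inr h))

end AngleAux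

set_option maxHeartbeats 2000000 in
open AngleAux in
/-- **The angle between `g` and `ν` can be arbitrarily close to `π/2`.** For every
`δ > 0` there is a reversible nearest-neighbour periodic environment on `ℤ²` with all
one-step probabilities positive and average negative gradient `g ≠ 0` such that the
angle `arccos (⟨g,ν⟩ / (|g||ν|))` between `g` and the drift `ν` exceeds `π/2 - δ`,
while still `⟨g, ν⟩ > 0`. -/
theorem angle_can_approach_right_angle (δ : ℝ) (hδ : 0 < δ) :
    ∃ M1 M2 : ℕ, 0 < M1 ∧ 0 < M2 ∧
    ∃ p : (Fin 2 → ℤ) → (Fin 2 → ℤ) → ℝ,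
      (∀ x y, 0 ≤ p x y) ∧ (∀ x, HasSum (p x) 1) ∧
      (∀ x y, p (x + Pi.single 0 (M1 : ℤ)) y = p x y) ∧
      (∀ x y, p (x + Pi.single 1 (M2 : ℤ)) y = p x y) ∧
      IsNearestNeighbour p ∧ (∀ x e, IsUnitVec e → 0 < p x e) ∧
      (∃ u : (Fin 2 → ℤ) → ℝ, u 0 = 0 ∧ ∀ x e, IsUnitVec e →
        u x - u (x + e) = Real.log (p x e / p (x + e) (-e))) ∧
      ∃ π : (Fin 2 → ℤ) → ℝ,
        (∀ x, 0 ≤ π x) ∧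
        (∀ x, π (x + Pi.single 0 (M1 : ℤ)) = π x) ∧
        (∀ x, π (x + Pi.single 1 (M2 : ℤ)) = π x) ∧
        (∑ x ∈ fundDom M1 M2, π x = 1) ∧
        (∀ y : Fin 2 → ℤ, ∑ x ∈ fundDom M1 M2, π x *
            ∑' z : Fin 2 → ℤ,
              Set.indicator {z : Fin 2 → ℤ |
                (M1 : ℤ) ∣ (x 0 + z 0 - y 0) ∧ (M2 : ℤ) ∣ (x 1 + z 1 - y 1)} (p x) z
          = π y) ∧
        ∃ g ν : Fin 2 → ℝ,
          g = avgNegGrad M1 M2 p ∧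
          ν = (fun i => ∑ x ∈ fundDom M1 M2, π x *
            ∑' y : Fin 2 → ℤ, p x y * (y i : ℝ)) ∧
          g ≠ 0 ∧
          0 < g 0 * ν 0 + g 1 * ν 1 ∧
          Real.pi / 2 - δ <
            Real.arccos ((g 0 * ν 0 + g 1 * ν 1) /
              (Real.sqrt (g 0 ^ 2 + g 1 ^ 2) * Real.sqrt (ν 0 ^ 2 + ν 1 ^ 2))) := by
  -- parameters
  obtain ⟨δ', hδ'def⟩ : ∃ x : ℝ, x = min δ 1 := ⟨_, rfl⟩
  have hδ'0 : 0 < δ' := by rw [hδ'def]; exact lt_min hδ one_pos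
  have hδ'1 : δ' ≤ 1 := by rw [hδ'def]; exact min_le_right _ _
  have hδ'δ : δ' ≤ δ := by rw [hδ'def]; exact min_le_left _ _
  obtain ⟨ε, hεdef⟩ : ∃ x : ℝ, x = δ' / 16 := ⟨_, rfl⟩
  have hε0 : 0 < ε := by rw [hεdef]; positivity
  have hε1 : ε ≤ 1 / 16 := by rw [hεdef]; linarith
  have hεsq : ε ^ 2 ≤ 1 / 256 := by
    have h1 : ε * ε ≤ (1/16) * (1/16) :=
      mul_le_mul hε1 hε1 hε0.le (by norm_num)
    linarith only [h1]
  have hexpε : ε + 1 ≤ Real.exp ε := Real.add_one_le_exp ε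
  have hexp1 : 1 < Real.exp ε := by linarith
  have hexp3 : Real.exp ε ≤ 3 := by
    calc Real.exp ε ≤ Real.exp 1 := Real.exp_le_exp.mpr (by linarith)
    _ ≤ 3 := by linarith [Real.exp_one_lt_d9]
  have hden : (0:ℝ) < 1 + Real.exp ε := by positivity
  obtain ⟨a, hadef⟩ : ∃ x : ℝ, x = 2 * ε ^ 2 := ⟨_, rfl⟩
  obtain ⟨b, hbdef⟩ : ∃ x : ℝ, x = ε ^ 2 := ⟨_, rfl⟩
  obtain ⟨c, hcdef⟩ : ∃ x : ℝ, x = (1 - 3 * ε ^ 2) / (1 + Real.exp ε) := ⟨_, rfl⟩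
  have hnum : (0:ℝ) < 1 - 3 * ε ^ 2 := by linarith
  have hc : 0 < c := by rw [hcdef]; exact div_pos hnum hden
  have hc8 : 1 / 8 ≤ c := by
    rw [hcdef, le_div_iff₀ hden]; linarith
  obtain ⟨cc, hccdef⟩ : ∃ x : ℝ, x = c * Real.exp ε := ⟨_, rfl⟩
  have ha : 0 < a := by rw [hadef]; positivity
  have hb : 0 < b := by rw [hbdef]; positivity
  have hcc : 0 < cc := by rw [hccdef]; exact mul_pos hc (Real.exp_pos _)
  have hsum1 : a + b + cc + c = 1 := by
    have h1 : cc + c = 1 - 3 * ε ^ 2 := by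
      rw [hccdef, hcdef]; field_simp; ring
    rw [hadef, hbdef]; linarith
  -- key HasSum fact
  have key : HasSum (ff a b cc c) 1 := by
    have : HasSum (ff a b cc c) (∑ y ∈ SS, ff a b cc c y) :=
      hasSum_sum_of_ne_finset_zero (fun y hy => ff_off hy)
    rwa [sum_SS, ff0, ff1, ff2, ff3, hsum1] at this
  -- log ratios
  have hab : a / b = 2 := by
    rw [hadef, hbdef, mul_div_assoc, div_self (by positivity), mul_one]
  have hba : b / a = 2⁻¹ := by
    rw [hadef, hbdef, div_eq_iff (by positivity : (2:ℝ) * ε ^ 2 ≠ 0)]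
    ring
  have hccc : cc / c = Real.exp ε := by
    rw [hccdef, mul_comm, mul_div_assoc, div_self (ne_of_gt hc), mul_one]
  have hcccinv : c / cc = (Real.exp ε)⁻¹ := by
    rw [hccdef, div_eq_iff (by positivity : c * Real.exp ε ≠ 0), inv_mul_eq_div,
      eq_div_iff (ne_of_gt (Real.exp_pos ε))]
    try ring
  -- fundamental domain
  have hfd : fundDom 1 1 = ({![(0:ℤ), 0]} : Finset (Fin 2 → ℤ)) := by
    simp [fundDom, Finset.range_one]
  refine ⟨1, 1, one_pos, one_pos, pp a b cc c, ?_, fun _ => key, fun _ _ => rfl,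
    fun _ _ => rfl, ?_, ?_, ?_, ?_⟩
  · -- nonneg
    intro x y
    simp only [pp, ff]
    split_ifs <;> linarith
  · -- nearest neighbour
    intro x y hy
    have hyS : y ∈ SS := by
      by_contra h
      exact hy (ff_off h)
    simp only [SS, Finset.mem_insert, Finset.mem_singleton] at hyS
    rcases hyS with h | h | h | h
    · exact ⟨0, Or.inl h⟩
    · exact ⟨0, Or.inr h⟩
    · exact ⟨1, Or.inl h⟩
    · exact ⟨1, Or.inr h⟩
  · -- positivity on unit vectors
    intro x e he
    rcases unit_cases he with rfl | rfl | rfl | rfl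
    · rw [show pp a b cc c x (EE 0) = a from ff0]; exact ha
    · rw [show pp a b cc c x (-EE 0) = b from ff1]; exact hb
    · rw [show pp a b cc c x (EE 1) = cc from ff2]; exact hcc
    · rw [show pp a b cc c x (-EE 1) = c from ff3]; exact hc
  · -- potential
    refine ⟨uu (Real.log 2) ε, by simp [uu], ?_⟩
    intro x e he
    rcases unit_cases he with rfl | rfl | rfl | rfl
    · rw [show pp a b cc c x (EE 0) = a from ff0,
        show pp a b cc c (x + EE 0) (-EE 0) = b from ff1, hab]
      simp only [uu, EE, Pi.add_apply, Pi.single_apply]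
      push_cast
      norm_num
      try ring
    · rw [show pp a b cc c x (-EE 0) = b from ff1, neg_neg,
        show pp a b cc c (x + -EE 0) (EE 0) = a from ff0, hba, Real.log_inv]
      simp only [uu, EE, Pi.add_apply, Pi.neg_apply, Pi.single_apply]
      push_cast
      norm_num
      try ring
    · rw [show pp a b cc c x (EE 1) = cc from ff2,
        show pp a b cc c (x + EE 1) (-EE 1) = c from ff3, hccc, Real.log_exp]
      simp only [uu, EE, Pi.add_apply, Pi.single_apply]
      push_cast
      norm_num
      try ring
    · rw [show pp a b cc c x (-EE 1) = c from ff3, neg_neg,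
        show pp a b cc c (x + -EE 1) (EE 1) = cc from ff2, hcccinv, Real.log_inv,
        Real.log_exp]
      simp only [uu, EE, Pi.add_apply, Pi.neg_apply, Pi.single_apply]
      push_cast
      norm_num
      try ring
  -- stationary measure and drift
  refine ⟨fun _ => 1, fun _ => zero_le_one, fun _ => rfl, fun _ => rfl, ?_, ?_, ?_⟩
  · rw [hfd]; simp
  · -- stationarity
    intro y
    rw [hfd, Finset.sum_singleton, one_mul]
    have hset : {z : Fin 2 → ℤ |
        ((1:ℕ) : ℤ) ∣ ((![(0:ℤ), 0]) 0 + z 0 - y 0) ∧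
        ((1:ℕ) : ℤ) ∣ ((![(0:ℤ), 0]) 1 + z 1 - y 1)} = Set.univ := by
      apply Set.eq_univ_of_forall
      intro z
      constructor <;> · push_cast; exact one_dvd _
    rw [hset, Set.indicator_univ]
    exact key.tsum_eq
  -- the vectors g and ν
  have hg0 : avgNegGrad 1 1 (pp a b cc c) 0 = Real.log 2 := by
    simp only [avgNegGrad, Matrix.cons_val_zero, Finset.sum_range_one, Nat.cast_one,
      inv_one, one_mul, Nat.cast_zero]
    rw [show pp a b cc c (Pi.single 0 0) (Pi.single 0 1) = a from ff0,
      show pp a b cc c (Pi.single 0 (0 + 1)) (-Pi.single 0 1) = b from ff1, hab]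
  have hg1 : avgNegGrad 1 1 (pp a b cc c) 1 = ε := by
    simp only [avgNegGrad, Matrix.cons_val_one, Matrix.head_cons, Matrix.cons_val_zero,
      Finset.sum_range_one, Nat.cast_one, inv_one, one_mul, Nat.cast_zero]
    rw [show pp a b cc c (Pi.single 1 0) (Pi.single 1 1) = cc from ff2,
      show pp a b cc c (Pi.single 1 (0 + 1)) (-Pi.single 1 1) = c from ff3, hccc,
      Real.log_exp]
  have hT : ∀ i : Fin 2, (∑' y : Fin 2 → ℤ, ff a b cc c y * (y i : ℝ)) =
      a * ((EE 0) i : ℝ) + b * ((-EE 0) i : ℝ) + cc * ((EE 1) i : ℝ)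
        + c * ((-EE 1) i : ℝ) := by
    intro i
    rw [tsum_eq_sum (s := SS) (fun y hy => by rw [ff_off hy, zero_mul])]
    rw [sum_SS (fun y => ff a b cc c y * (y i : ℝ)), ff0, ff1, ff2, ff3]
  have hT0 : (∑' y : Fin 2 → ℤ, ff a b cc c y * (y 0 : ℝ)) = a - b := by
    rw [hT 0]
    simp [EE, Pi.single_apply]
    try ring
  have hT1 : (∑' y : Fin 2 → ℤ, ff a b cc c y * (y 1 : ℝ)) = cc - c := by
    rw [hT 1]
    simp [EE, Pi.single_apply]
    try ring
  -- numeric facts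
  have hL : (1:ℝ)/2 < Real.log 2 := by linarith [Real.log_two_gt_d9]
  have hm0 : 0 < cc - c := by
    rw [hccdef]
    have h1 : c * (ε + 1) ≤ c * Real.exp ε := mul_le_mul_of_nonneg_left hexpε hc.le
    have h2 : 0 < c * ε := mul_pos hc hε0
    linarith only [h1, h2]
  have hm8 : ε ≤ 8 * (cc - c) := by
    rw [hccdef]
    have h1 : c * (ε + 1) ≤ c * Real.exp ε := mul_le_mul_of_nonneg_left hexpε hc.le
    have h2 : 1 / 8 * ε ≤ c * ε := mul_le_mul_of_nonneg_right hc8 hε0.le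
    linarith only [h1, h2]
  refine ⟨avgNegGrad 1 1 (pp a b cc c),
    (fun i => ∑ x ∈ fundDom 1 1, (fun _ => (1:ℝ)) x *
      ∑' y : Fin 2 → ℤ, pp a b cc c x y * (y i : ℝ)), rfl, rfl, ?_, ?_, ?_⟩
  · -- g ≠ 0
    intro h
    have h0 := congrFun h 0
    rw [hg0] at h0
    simp only [Pi.zero_apply] at h0
    exact (Real.log_pos one_lt_two).ne' h0
  · -- positivity of the inner product
    rw [hg0, hg1]
    simp only [pp, hfd, Finset.sum_singleton, one_mul]
    rw [hT0, hT1]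
    have h1 : 0 < Real.log 2 * (a - b) := by
      rw [hadef, hbdef, show (2:ℝ) * ε ^ 2 - ε ^ 2 = ε ^ 2 by ring]
      exact mul_pos (by linarith) (pow_pos hε0 2)
    linarith [mul_pos hε0 hm0, h1]
  · -- the angle bound
    rw [hg0, hg1]
    simp only [pp, hfd, Finset.sum_singleton, one_mul]
    rw [hT0, hT1]
    have hab2 : a - b = ε ^ 2 := by rw [hadef, hbdef]; ring
    rw [hab2]
    obtain ⟨L, hLdef⟩ : ∃ x : ℝ, x = Real.log 2 := ⟨_, rfl⟩
    obtain ⟨m, hmdef⟩ : ∃ x : ℝ, x = cc - c := ⟨_, rfl⟩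
    rw [← hLdef, ← hmdef]
    rw [← hLdef] at hL
    rw [← hmdef] at hm0 hm8
    obtain ⟨N, hNdef⟩ : ∃ x : ℝ, x = L * ε ^ 2 + ε * m := ⟨_, rfl⟩
    rw [← hNdef]
    have hN : 0 < N := by
      rw [hNdef]
      have h1 : 0 < ε * m := mul_pos hε0 hm0
      have h2 : 0 < L * ε ^ 2 := mul_pos (by linarith) (pow_pos hε0 2)
      linarith
    have hD1 : L ≤ Real.sqrt (L ^ 2 + ε ^ 2) := by
      have h1 : Real.sqrt (L ^ 2) ≤ Real.sqrt (L ^ 2 + ε ^ 2) :=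
        Real.sqrt_le_sqrt (by linarith [sq_nonneg ε])
      rwa [Real.sqrt_sq (by linarith : (0:ℝ) ≤ L)] at h1
    have hD2 : m ≤ Real.sqrt ((ε ^ 2) ^ 2 + m ^ 2) := by
      have h1 : Real.sqrt (m ^ 2) ≤ Real.sqrt ((ε ^ 2) ^ 2 + m ^ 2) :=
        Real.sqrt_le_sqrt (by linarith [sq_nonneg (ε ^ 2)])
      rwa [Real.sqrt_sq hm0.le] at h1
    have hLm : 0 < L * m := mul_pos (by linarith) hm0
    have hD : L * m ≤ Real.sqrt (L ^ 2 + ε ^ 2) * Real.sqrt ((ε ^ 2) ^ 2 + m ^ 2) :=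
      mul_le_mul hD1 hD2 hm0.le (Real.sqrt_nonneg _)
    have hDpos : 0 < Real.sqrt (L ^ 2 + ε ^ 2) * Real.sqrt ((ε ^ 2) ^ 2 + m ^ 2) :=
      lt_of_lt_of_le hLm hD
    have hX0 : 0 < N / (Real.sqrt (L ^ 2 + ε ^ 2) * Real.sqrt ((ε ^ 2) ^ 2 + m ^ 2)) :=
      div_pos hN hDpos
    have hX10 : N / (Real.sqrt (L ^ 2 + ε ^ 2) * Real.sqrt ((ε ^ 2) ^ 2 + m ^ 2))
        ≤ 10 * ε := by
      calc N / (Real.sqrt (L ^ 2 + ε ^ 2) * Real.sqrt ((ε ^ 2) ^ 2 + m ^ 2))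
          ≤ N / (L * m) := div_le_div_of_nonneg_left hN.le hLm hD
        _ ≤ 10 * ε := by
            rw [div_le_iff₀ hLm, hNdef]
            have h1 : L * ε * ε ≤ L * ε * (8 * m) :=
              mul_le_mul_of_nonneg_left hm8
                (mul_pos (show (0:ℝ) < L by linarith) hε0).le
            have h2 : 0 ≤ (2 * L - 1) * (ε * m) :=
              mul_nonneg (by linarith) (mul_nonneg hε0.le hm0.le)
            linarith only [h1, h2]
    have hsin : 3 / 4 * δ' < Real.sin δ' := by
      have h1 := Real.sin_gt_sub_cube hδ'0
      have h0 : (0:ℝ) ≤ 1 - δ' ^ 2 := by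
        have := mul_le_mul_of_nonneg_left hδ'1 hδ'0.le
        linarith only [this, hδ'1]
      have h2 : 0 ≤ δ' * (1 - δ' ^ 2) := mul_nonneg hδ'0.le h0
      linarith only [h1, h2, hδ'0]
    have hXsin : N / (Real.sqrt (L ^ 2 + ε ^ 2) * Real.sqrt ((ε ^ 2) ^ 2 + m ^ 2))
        < Real.sin δ' := by
      linarith [hX10, hsin]
    have hsin1 : Real.sin δ' ≤ 1 := Real.sin_le_one _
    have hpi2 : δ' ≤ Real.pi / 2 := by linarith [Real.pi_gt_three]
    have harcsin : Real.arcsin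
        (N / (Real.sqrt (L ^ 2 + ε ^ 2) * Real.sqrt ((ε ^ 2) ^ 2 + m ^ 2))) < δ' := by
      rw [Real.arcsin_lt_iff_lt_sin ⟨by linarith, by linarith⟩
        ⟨by linarith [Real.pi_gt_three], hpi2⟩]
      exact hXsin
    rw [Real.arccos_eq_pi_div_two_sub_arcsin]
    linarith
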